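/- Let the index set {1,…,p} be partitioned into g nonempty groups G_1,…,G_g, with q_l the cardinality of G_l. Fix θ ∈ ℝ^p such that for each group l the subvector θ_{G_l} is nonzero, fix λ > 0 and a positive integer n_e, and let (e_{ij})_{1≤i≤n_e, 1≤j≤p} be a jointly independent family of real Gaussian random variables where e_{ij} ~ N(0, λ√(q_l)/‖θ_{G_l}‖₂) when j ∈ G_l. Then the PANDA expected penalty satisfies E[ ∑_{i=1}^{n_e} ( ∑_{j=1}^p θ_j e_{ij} )² ] = λ n_e ∑_{l=1}^g √(q_l) ‖θ_{G_l}‖₂, i.e. the group-lasso penalty. -/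

import Mathlib

open MeasureTheory ProbabilityTheory Finset
open scoped ProbabilityTheory NNReal ENNReal
open Real

lemma aux_integrable_pow_mul_exp {b : ℝ} (hb : 0 < b) (n : ℕ) :
    Integrable (fun x : ℝ => x ^ n * Real.exp (-b * x ^ 2)) := by
  have h := integrable_rpow_mul_exp_neg_mul_sq hb (s := (n : ℝ))
    (by exact_mod_cast neg_one_lt_zero.trans_le (Nat.cast_nonneg n))
  simpa [Real.rpow_natCast] using h

lemma aux_sq_exp_integral {b : ℝ} (hb : 0 < b) :
    ∫ x : ℝ, x ^ 2 * Real.exp (-b * x ^ 2)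
      = Real.sqrt π * ((Real.sqrt b)⁻¹) ^ 3 / 2 := by
  have h0 : (∫ x : ℝ, x ^ 2 * Real.exp (-b * x ^ 2))
      = ∫ x : ℝ, (fun y : ℝ => y ^ 2 * Real.exp (-b * y ^ 2)) |x| := by
    congr 1; funext x; simp [sq_abs]
  rw [h0, integral_comp_abs (f := fun y : ℝ => y ^ 2 * Real.exp (-b * y ^ 2))]
  have h1 : (∫ x in Set.Ioi (0:ℝ), x ^ 2 * Real.exp (-b * x ^ 2))
      = ∫ x in Set.Ioi (0:ℝ), ((2:ℝ) * x ^ ((2:ℝ) - 1)) •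
          ((fun y : ℝ => (1/2 : ℝ) * (y ^ ((1:ℝ)/2) * Real.exp (-(b * y)))) (x ^ (2:ℝ))) := by
    refine setIntegral_congr_fun measurableSet_Ioi (fun x hx => ?_)
    have hx0 : (0:ℝ) < x := hx
    have hx2 : x ^ (2:ℝ) = x ^ 2 := by rw [show (2:ℝ) = ((2:ℕ):ℝ) by norm_num, Real.rpow_natCast]
    have hhalf : (x ^ 2 : ℝ) ^ ((1:ℝ)/2) = x := by
      rw [show (1:ℝ)/2 = ((2:ℝ))⁻¹ by norm_num, ← Real.rpow_natCast x 2,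
        ← Real.rpow_mul hx0.le]
      norm_num
    rw [hx2]
    simp only [smul_eq_mul, hhalf]
    have : (2:ℝ) - 1 = ((1:ℕ):ℝ) := by norm_num
    rw [this, Real.rpow_natCast]
    ring_nf
  rw [h1, integral_comp_rpow_Ioi_of_pos (g := fun y : ℝ => (1/2 : ℝ) * (y ^ ((1:ℝ)/2) * Real.exp (-(b * y)))) (p := (2:ℝ)) two_pos, integral_const_mul]
  have h2 : (∫ y in Set.Ioi (0:ℝ), y ^ ((1:ℝ)/2) * Real.exp (-(b * y)))
      = (1 / b) ^ ((3:ℝ)/2) * Real.Gamma ((3:ℝ)/2) := by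
    have := integral_rpow_mul_exp_neg_mul_Ioi (a := (3:ℝ)/2) (r := b) (by norm_num) hb
    simpa [show (3:ℝ)/2 - 1 = 1/2 by norm_num] using this
  rw [h2]
  have hΓ : Real.Gamma ((3:ℝ)/2) = Real.sqrt π / 2 := by
    rw [show (3:ℝ)/2 = 1/2 + 1 by norm_num, Real.Gamma_add_one (by norm_num),
      Real.Gamma_one_half_eq]
    ring
  have hpow : ((1:ℝ) / b) ^ ((3:ℝ)/2) = ((Real.sqrt b)⁻¹) ^ 3 := by
    rw [show ((3:ℝ)/2) = ((1:ℝ)/2) * ((3:ℕ):ℝ) by norm_num,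
      Real.rpow_mul (by positivity), Real.rpow_natCast]
    congr 1
    rw [show ((1:ℝ)/2) = 1/(2:ℝ) by norm_num, ← Real.sqrt_eq_rpow, one_div, Real.sqrt_inv]
  rw [hΓ, hpow]
  ring

lemma aux_gauss_pdf_eq (v : ℝ≥0) :
    gaussianPDFReal 0 v = fun x =>
      (Real.sqrt (2 * π * v))⁻¹ * Real.exp (-(2 * (v:ℝ))⁻¹ * x ^ 2) := by
  funext x
  rw [gaussianPDFReal]
  congr 1
  rw [sub_zero]
  congr 1
  field_simp

lemma aux_gauss_integral {v : ℝ≥0} (hv : v ≠ 0) (g : ℝ → ℝ) :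
    ∫ x, g x ∂(gaussianReal 0 v) = ∫ x, gaussianPDFReal 0 v x * g x := by
  rw [gaussianReal_of_var_ne_zero _ hv]
  have hm : Measurable fun x => Real.toNNReal (gaussianPDFReal 0 v x) :=
    (measurable_gaussianPDFReal 0 v).real_toNNReal
  rw [show gaussianPDF 0 v = (fun x => ((Real.toNNReal (gaussianPDFReal 0 v x) : ℝ≥0) : ℝ≥0∞))
      from rfl,
    integral_withDensity_eq_integral_smul hm]
  congr 1; funext x
  simp [NNReal.smul_def, Real.coe_toNNReal _ (gaussianPDFReal_nonneg 0 v x)]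

lemma aux_gauss_integrable {v : ℝ≥0} (hv : v ≠ 0) {g : ℝ → ℝ}
    (h : Integrable (fun x => gaussianPDFReal 0 v x * g x)) :
    Integrable g (gaussianReal 0 v) := by
  rw [gaussianReal_of_var_ne_zero _ hv]
  have hm : Measurable fun x => Real.toNNReal (gaussianPDFReal 0 v x) :=
    (measurable_gaussianPDFReal 0 v).real_toNNReal
  rw [show gaussianPDF 0 v = (fun x => ((Real.toNNReal (gaussianPDFReal 0 v x) : ℝ≥0) : ℝ≥0∞))
      from rfl,
    integrable_withDensity_iff_integrable_smul hm]
  refine h.congr (Filter.Eventually.of_forall fun x => ?_)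
  simp [NNReal.smul_def, Real.coe_toNNReal _ (gaussianPDFReal_nonneg 0 v x)]

lemma aux_gauss_integrable_pow {v : ℝ≥0} (hv : v ≠ 0) (n : ℕ) :
    Integrable (fun x => x ^ n) (gaussianReal 0 v) := by
  have hb : (0:ℝ) < (2 * (v:ℝ))⁻¹ := by
    have : (0:ℝ) < (v:ℝ) := lt_of_le_of_ne (v.coe_nonneg) (by exact_mod_cast (Ne.symm hv))
    positivity
  refine aux_gauss_integrable hv ?_
  rw [aux_gauss_pdf_eq]
  have h := (aux_integrable_pow_mul_exp hb n).const_mul (Real.sqrt (2 * π * v))⁻¹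
  refine h.congr (Filter.Eventually.of_forall fun x => ?_)
  ring

lemma aux_gauss_mean {v : ℝ≥0} : ∫ x, x ∂(gaussianReal 0 v) = 0 := by
  by_cases hv : v = 0
  · simp [hv]
  rw [aux_gauss_integral hv]
  have hodd : ∀ x : ℝ, gaussianPDFReal 0 v (-x) * (-x) = -(gaussianPDFReal 0 v x * x) := by
    intro x
    rw [aux_gauss_pdf_eq]
    simp only [neg_sq]
    ring
  have hsym := integral_neg_eq_self (fun x => gaussianPDFReal 0 v x * x) (volume : Measure ℝ)
  simp_rw [hodd, integral_neg] at hsym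
  linarith

lemma aux_gauss_second_moment {v : ℝ≥0} : ∫ x, x ^ 2 ∂(gaussianReal 0 v) = (v : ℝ) := by
  by_cases hv : v = 0
  · simp [hv]
  have hvpos : (0:ℝ) < (v:ℝ) := lt_of_le_of_ne (v.coe_nonneg) (by exact_mod_cast (Ne.symm hv))
  have hb : (0:ℝ) < (2 * (v:ℝ))⁻¹ := by positivity
  rw [aux_gauss_integral hv, aux_gauss_pdf_eq]
  have h1 : (∫ x : ℝ, (Real.sqrt (2 * π * v))⁻¹ * Real.exp (-(2 * (v:ℝ))⁻¹ * x ^ 2) * x ^ 2)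
      = (Real.sqrt (2 * π * v))⁻¹ * ∫ x : ℝ, x ^ 2 * Real.exp (-(2 * (v:ℝ))⁻¹ * x ^ 2) := by
    rw [← integral_const_mul]
    congr 1; funext x; ring
  rw [h1, aux_sq_exp_integral hb]
  rw [Real.sqrt_inv, inv_inv]
  have h2 : Real.sqrt (2 * π * (v:ℝ)) = Real.sqrt π * Real.sqrt (2 * (v:ℝ)) := by
    rw [← Real.sqrt_mul (by positivity)]
    congr 1; ring
  rw [h2]
  have h3 : Real.sqrt (2 * (v:ℝ)) ^ 3 = (2 * (v:ℝ)) * Real.sqrt (2 * (v:ℝ)) := by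
    have := Real.sq_sqrt (by positivity : (0:ℝ) ≤ 2 * (v:ℝ))
    nlinarith [Real.sqrt_nonneg (2 * (v:ℝ))]
  have hsp : (0:ℝ) < Real.sqrt (2 * (v:ℝ)) := Real.sqrt_pos.mpr (by positivity)
  have hpp : (0:ℝ) < Real.sqrt π := Real.sqrt_pos.mpr Real.pi_pos
  rw [h3]
  field_simp


/-- Group-lasso row of Table 1: with noise variance λ√(q_l)/‖θ_{G_l}‖₂ for every
coordinate in group l, the expected PANDA penalty is the group-lasso penalty
λ n_e ∑_l √(q_l) ‖θ_{G_l}‖₂. -/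
theorem stmt_7 {Ω : Type*} [MeasureSpace Ω] [IsProbabilityMeasure (ℙ : Measure Ω)]
    {p g nE : ℕ} (hnE : 0 < nE)
    (G : Fin p → Fin g) (hG : ∀ l : Fin g, ∃ j, G j = l)
    (θ : Fin p → ℝ) (lam : ℝ) (hlam : 0 < lam)
    (q : Fin g → ℕ) (hq : ∀ l, q l = (Finset.univ.filter (fun j => G j = l)).card)
    (nrm : Fin g → ℝ)
    (hnrm : ∀ l, nrm l
      = Real.sqrt (∑ j ∈ Finset.univ.filter (fun j => G j = l), (θ j) ^ 2))
    (hθ : ∀ l, nrm l ≠ 0)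
    (e : Fin nE → Fin p → Ω → ℝ) (hmeas : ∀ i j, Measurable (e i j))
    (hindep : iIndepFun
      (fun ij : Fin nE × Fin p => e ij.1 ij.2) ℙ)
    (v : Fin p → ℝ≥0)
    (hv : ∀ j, (v j : ℝ) = lam * Real.sqrt (q (G j)) / nrm (G j))
    (hgauss : ∀ i j, Measure.map (e i j) ℙ = gaussianReal 0 (v j)) :
    (∫ ω, ∑ i, (∑ j, θ j * e i j ω) ^ 2 ∂ℙ)
      = lam * nE * ∑ l, Real.sqrt (q l) * nrm l := by
  -- positivity facts
  have hqpos : ∀ l, 0 < (q l : ℝ) := by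
    intro l
    obtain ⟨j, hj⟩ := hG l
    have hmem : j ∈ univ.filter (fun j => G j = l) := by simp [hj]
    have := Finset.card_pos.mpr ⟨j, hmem⟩
    rw [hq l]
    exact_mod_cast this
  have hnrmpos : ∀ l, 0 < nrm l := fun l =>
    lt_of_le_of_ne (by rw [hnrm l]; exact Real.sqrt_nonneg _) (Ne.symm (hθ l))
  have hvpos : ∀ j, (0:ℝ) < (v j : ℝ) := by
    intro j
    rw [hv j]
    have h1 := hqpos (G j)
    have h2 := hnrmpos (G j)
    have h3 : 0 < Real.sqrt (q (G j)) := Real.sqrt_pos.mpr h1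
    positivity
  have hvne : ∀ j, v j ≠ 0 := by
    intro j h
    have := hvpos j
    rw [h] at this
    simp at this
  -- integrability of the noise variables
  have hInt1 : ∀ i j, Integrable (e i j) ℙ := by
    intro i j
    have h : Integrable (fun x : ℝ => x ^ 1) (Measure.map (e i j) ℙ) := by
      rw [hgauss i j]; exact aux_gauss_integrable_pow (hvne j) 1
    have := (integrable_map_measure h.aestronglyMeasurable (hmeas i j).aemeasurable).mp h
    simpa [Function.comp_def] using this
  have hInt2 : ∀ i j, Integrable (fun ω => e i j ω ^ 2) ℙ := by
    intro i j
    have h : Integrable (fun x : ℝ => x ^ 2) (Measure.map (e i j) ℙ) := by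
      rw [hgauss i j]; exact aux_gauss_integrable_pow (hvne j) 2
    have := (integrable_map_measure h.aestronglyMeasurable (hmeas i j).aemeasurable).mp h
    exact this
  -- moments
  have hMean : ∀ i j, ∫ ω, e i j ω ∂ℙ = 0 := by
    intro i j
    have h := integral_map (μ := ℙ) (hmeas i j).aemeasurable
      (f := fun x : ℝ => x) measurable_id.aestronglyMeasurable
    rw [hgauss i j, aux_gauss_mean] at h
    exact h.symm
  have hSq : ∀ i j, ∫ ω, e i j ω ^ 2 ∂ℙ = (v j : ℝ) := by
    intro i j
    have h := integral_map (μ := ℙ) (hmeas i j).aemeasurable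
      (f := fun x : ℝ => x ^ 2) (measurable_id.pow_const 2).aestronglyMeasurable
    rw [hgauss i j, aux_gauss_second_moment] at h
    exact h.symm
  -- products
  have hIntprod : ∀ i (j k : Fin p), Integrable (fun ω => e i j ω * e i k ω) ℙ := by
    intro i j k
    by_cases hjk : j = k
    · subst hjk; simpa [sq] using hInt2 i j
    · have hind : IndepFun (e i j) (e i k) ℙ :=
        hindep.indepFun (i := (i, j)) (j := (i, k)) (by simp [Prod.ext_iff, hjk])
      exact hind.integrable_mul (hInt1 i j) (hInt1 i k)
  have hProdInt : ∀ i (j k : Fin p),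
      ∫ ω, e i j ω * e i k ω ∂ℙ = if j = k then (v j : ℝ) else 0 := by
    intro i j k
    by_cases hjk : j = k
    · subst hjk; simp only [if_pos rfl]
      simpa [sq] using hSq i j
    · simp only [if_neg hjk]
      have hind : IndepFun (e i j) (e i k) ℙ :=
        hindep.indepFun (i := (i, j)) (j := (i, k)) (by simp [Prod.ext_iff, hjk])
      have h := hind.integral_mul_eq_mul_integral (hInt1 i j).aestronglyMeasurable (hInt1 i k).aestronglyMeasurable
      calc ∫ ω, e i j ω * e i k ω ∂ℙ = ∫ ω, (e i j * e i k) ω ∂ℙ := rfl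
        _ = (∫ ω, e i j ω ∂ℙ) * ∫ ω, e i k ω ∂ℙ := h
        _ = 0 := by rw [hMean i j]; ring
  -- expand the square
  have hexp : (fun ω => ∑ i, (∑ j, θ j * e i j ω) ^ 2)
      = fun ω => ∑ i : Fin nE, ∑ j : Fin p, ∑ k : Fin p,
          (θ j * θ k) * (e i j ω * e i k ω) := by
    funext ω
    refine Finset.sum_congr rfl fun i _ => ?_
    rw [sq, Finset.sum_mul_sum]
    refine Finset.sum_congr rfl fun j _ => Finset.sum_congr rfl fun k _ => ?_
    ring
  rw [hexp]
  rw [integral_finset_sum _ (fun i _ => integrable_finset_sum _ (fun j _ =>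
    integrable_finset_sum _ (fun k _ => (hIntprod i j k).const_mul _)))]
  have hstep : ∀ i : Fin nE,
      (∫ ω, ∑ j : Fin p, ∑ k : Fin p, (θ j * θ k) * (e i j ω * e i k ω) ∂ℙ)
        = ∑ j : Fin p, θ j ^ 2 * (v j : ℝ) := by
    intro i
    rw [integral_finset_sum _ (fun j _ => integrable_finset_sum _
      (fun k _ => (hIntprod i j k).const_mul _))]
    refine Finset.sum_congr rfl fun j _ => ?_
    rw [integral_finset_sum _ (fun k _ => (hIntprod i j k).const_mul _)]
    have : ∀ k : Fin p, (∫ ω, (θ j * θ k) * (e i j ω * e i k ω) ∂ℙ)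
        = (θ j * θ k) * if j = k then (v j : ℝ) else 0 := by
      intro k
      rw [integral_const_mul, hProdInt i j k]
    rw [Finset.sum_congr rfl fun k _ => this k]
    rw [Finset.sum_eq_single j]
    · simp [sq]
    · intro k _ hkj; simp [Ne.symm hkj]
    · intro h; exact absurd (Finset.mem_univ j) h
  rw [Finset.sum_congr rfl fun i _ => hstep i, Finset.sum_const, Finset.card_univ,
    Fintype.card_fin, nsmul_eq_mul]
  -- the algebraic identity
  have hS : ∑ j : Fin p, θ j ^ 2 * (v j : ℝ) = lam * ∑ l, Real.sqrt (q l) * nrm l := by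
    have hfib := Finset.sum_fiberwise_eq_sum_filter univ univ G (fun j => θ j ^ 2 * (v j : ℝ))
    have hfilter : univ.filter (fun j : Fin p => G j ∈ (univ : Finset (Fin g))) = univ :=
      Finset.filter_true_of_mem fun j _ => Finset.mem_univ _
    rw [hfilter] at hfib
    rw [← hfib, Finset.mul_sum]
    refine Finset.sum_congr rfl fun l _ => ?_
    have hcong : ∀ j ∈ univ.filter (fun j => G j = l),
        θ j ^ 2 * (v j : ℝ) = θ j ^ 2 * (lam * Real.sqrt (q l) / nrm l) := by
      intro j hj
      rw [hv j, (Finset.mem_filter.mp hj).2]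
    rw [Finset.sum_congr rfl hcong, ← Finset.sum_mul]
    have hsum : ∑ j ∈ univ.filter (fun j => G j = l), θ j ^ 2 = nrm l ^ 2 := by
      rw [hnrm l, Real.sq_sqrt (Finset.sum_nonneg fun j _ => sq_nonneg _)]
    rw [hsum]
    field_simp [hθ l]
  rw [hS]
  ring
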